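/- arXiv:2301.11056 — 3 statements merged into one kernel-verified Lean document; each statement's English description precedes it below -/
import Mathlib

section
/- Let n ≥ 2, m ≥ 1, and let p₁, …, pₙ be the first n odd primes. The group homomorphism φ : ℤⁿ → (ℤ/2ᵐℤ)ˣ sending (e₁, …, eₙ) to the class of ∏ᵢ₌₁ⁿ pᵢ^{eᵢ} is well-defined and its kernel is a subgroup of ℤⁿ of index 2^{m−1}. -/
/-- The i-th odd prime (1-indexed): `oddPrime 1 = 3`, `oddPrime 2 = 5`, … -/
noncomputable def oddPrime (i : ℕ) : ℕ := Nat.nth Nat.Prime i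

lemma oddPrime_one : oddPrime 1 = 3 := Nat.nth_prime_one_eq_three

lemma oddPrime_two : oddPrime 2 = 5 := by
  have := Nat.nth_count (p := Nat.Prime) (n := 5) (by norm_num)
  have hc : Nat.count Nat.Prime 5 = 2 := by decide
  rwa [hc] at this

lemma oddPrime_coprime (i m : ℕ) (hi : 1 ≤ i) : Nat.Coprime (oddPrime i) (2 ^ m) := by
  have hp : (oddPrime i).Prime := Nat.prime_nth_prime i
  have hne : oddPrime i ≠ 2 := by
    have h2 : Nat.nth Nat.Prime 0 < Nat.nth Nat.Prime i :=
      Nat.nth_strictMono Nat.infinite_setOf_prime (by omega)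
    rw [Nat.nth_prime_zero_eq_two] at h2
    unfold oddPrime; omega
  exact Nat.Coprime.pow_right m ((Nat.coprime_primes hp Nat.prime_two).mpr hne)

lemma five_pow_two_pow (k : ℕ) : ∃ c : ℕ, Odd c ∧ 5 ^ (2 ^ k) = 1 + c * 2 ^ (k + 2) := by
  induction k with
  | zero => exact ⟨1, odd_one, by norm_num⟩
  | succ k ih =>
    obtain ⟨c, hc, h⟩ := ih
    refine ⟨c + c ^ 2 * 2 ^ (k + 1), ?_, ?_⟩
    · refine hc.add_even ⟨c ^ 2 * 2 ^ k, by ring⟩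
    · have : (5 : ℕ) ^ (2 ^ (k + 1)) = (5 ^ (2 ^ k)) ^ 2 := by
        rw [← pow_mul, pow_succ]
      rw [this, h]; ring

lemma card_units_two_pow (m : ℕ) (hm : 1 ≤ m) : Nat.card (ZMod (2 ^ m))ˣ = 2 ^ (m - 1) := by
  haveI : NeZero (2 ^ m) := ⟨by positivity⟩
  rw [Nat.card_eq_fintype_card, ZMod.card_units_eq_totient,
    Nat.totient_prime_pow Nat.prime_two (by omega)]
  simp

lemma gen_top {m : ℕ} (hm : 1 ≤ m) (a b : (ZMod (2 ^ m))ˣ)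
    (ha : (a : ZMod (2 ^ m)) = (3 : ℕ)) (hb : (b : ZMod (2 ^ m)) = (5 : ℕ)) :
    Subgroup.zpowers a ⊔ Subgroup.zpowers b = ⊤ := by
  haveI : NeZero (2 ^ m) := ⟨by positivity⟩
  by_cases hm2 : 2 ≤ m
  · have hcard : Nat.card (ZMod (2 ^ m))ˣ = 2 ^ (m - 1) := card_units_two_pow m hm
    set K := Subgroup.zpowers b with hK
    set H := Subgroup.zpowers a ⊔ Subgroup.zpowers b with hH
    have hbord : 2 ^ (m - 2) ∣ orderOf b := by
      have h1 : orderOf b ∣ 2 ^ (m - 1) := hcard ▸ orderOf_dvd_natCard b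
      obtain ⟨t, ht, hbt⟩ := (Nat.dvd_prime_pow Nat.prime_two).mp h1
      rw [hbt]
      apply pow_dvd_pow
      by_contra hlt
      have hm3 : 3 ≤ m := by omega
      obtain ⟨M, rfl⟩ : ∃ M, m = M + 3 := ⟨m - 3, by omega⟩
      have hdvd : orderOf b ∣ 2 ^ M := hbt ▸ pow_dvd_pow 2 (by omega)
      have hpow : b ^ (2 ^ M) = 1 := orderOf_dvd_iff_pow_eq_one.mp hdvd
      obtain ⟨c, hc, h5c⟩ := five_pow_two_pow M
      obtain ⟨d, hd⟩ := hc
      have hcast : (((5 : ℕ) ^ (2 ^ M) : ℕ) : ZMod (2 ^ (M + 3))) = ((1 : ℕ) : ZMod (2 ^ (M + 3))) := by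
        have := congrArg (Units.val) hpow
        rw [Units.val_pow_eq_pow_val, hb] at this
        push_cast
        simpa using this
      rw [ZMod.natCast_eq_natCast_iff] at hcast
      have hcast' : Nat.ModEq (2 ^ (M + 3)) 1 (1 + c * 2 ^ (M + 2)) := by
        rw [← h5c]; exact hcast.symm
      have h2 : 2 ^ (M + 3) ∣ c * 2 ^ (M + 2) := by
        have := (Nat.modEq_iff_dvd' (by omega)).mp hcast'
        simpa using this
      rw [hd] at h2
      have h3 : 2 ^ (M + 3) ∣ d * 2 ^ (M + 3) + 2 ^ (M + 2) := by
        convert h2 using 1; ring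
      have h4 : (2 : ℕ) ^ (M + 3) ∣ 2 ^ (M + 2) :=
        (Nat.dvd_add_right ⟨d, by ring⟩).mp h3
      have := Nat.le_of_dvd (by positivity) h4
      have := Nat.pow_lt_pow_right (a := 2) (by norm_num) (show M + 2 < M + 3 by omega)
      omega
    have hanotK : a ∉ K := by
      intro haK
      obtain ⟨s, hs⟩ := Subgroup.mem_zpowers_iff.mp haK
      have h4 : (4 : ℕ) ∣ 2 ^ m := by
        calc (4 : ℕ) = 2 ^ 2 := by norm_num
        _ ∣ 2 ^ m := pow_dvd_pow 2 hm2
      let f : (ZMod (2 ^ m))ˣ →* (ZMod 4)ˣ :=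
        Units.map (ZMod.castHom h4 (ZMod 4)).toMonoidHom
      have hfb : f b = 1 := by
        apply Units.ext
        show (ZMod.castHom h4 (ZMod 4)) (b : ZMod (2 ^ m)) = 1
        rw [hb, map_natCast]; decide
      have hfa : ((f a : (ZMod 4)ˣ) : ZMod 4) = ((3 : ℕ) : ZMod 4) := by
        show (ZMod.castHom h4 (ZMod 4)) (a : ZMod (2 ^ m)) = _
        rw [ha, map_natCast]
      rw [← hs, map_zpow, hfb, one_zpow] at hfa
      have : ((1 : (ZMod 4)ˣ) : ZMod 4) = ((3 : ℕ) : ZMod 4) := hfa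
      revert this; decide
    have hKH : K ≤ H := le_sup_right
    have haH : a ∈ H := Subgroup.mem_sup_left (Subgroup.mem_zpowers a)
    have hdvd1 : Nat.card K ∣ Nat.card H := Subgroup.card_dvd_of_le hKH
    have hdvd2 : Nat.card H ∣ 2 ^ (m - 1) := hcard ▸ Subgroup.card_subgroup_dvd_card H
    have hKcard : Nat.card K = orderOf b := Nat.card_zpowers b
    have hbK : 2 ^ (m - 2) ∣ Nat.card H := (hKcard ▸ hbord).trans hdvd1
    obtain ⟨s, hs_le, hHcard⟩ := (Nat.dvd_prime_pow Nat.prime_two).mp hdvd2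
    by_cases hsm : s = m - 1
    · exact Subgroup.eq_top_of_card_eq H (by rw [hHcard, hsm, hcard])
    · exfalso
      have h1 : m - 2 ≤ s :=
        (Nat.pow_dvd_pow_iff_le_right (by norm_num)).mp (hHcard ▸ hbK)
      have hs2 : s = m - 2 := by omega
      have hKc : Nat.card K = Nat.card H :=
        Nat.dvd_antisymm hdvd1 (by rw [hHcard, hs2]; exact hKcard ▸ hbord)
      have : K = H := Subgroup.eq_of_le_of_card_ge hKH (le_of_eq hKc.symm)
      exact hanotK (this ▸ haH)
  · have hm1 : m = 1 := by omega
    subst hm1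
    ext x
    simp only [Subgroup.mem_top, iff_true]
    have hx : x = 1 := by revert x; decide
    rw [hx]; exact Subgroup.one_mem _

/-- For `n ≥ 2`, `m ≥ 1`, the group homomorphism `φ : ℤⁿ → (ℤ/2ᵐℤ)ˣ` sending
`(e₁, …, eₙ)` to the class of `∏ pᵢ^{eᵢ}` (where `p₁, …, pₙ` are the first `n`
odd primes) is well-defined — i.e. such a homomorphism exists, and on
nonnegative exponent vectors it is given by the indicated product — and its
kernel is a subgroup of `ℤⁿ` of index `2^(m-1)`. -/
theorem kernel_sublattice_index (n m : ℕ) (hn : 2 ≤ n) (hm : 1 ≤ m) :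
    ∃ φ : (Fin n → ℤ) →+ Additive (ZMod (2 ^ m))ˣ,
      (∀ e : Fin n → ℕ,
        ((Additive.toMul (φ fun i => (e i : ℤ)) : (ZMod (2 ^ m))ˣ) : ZMod (2 ^ m))
          = ∏ i : Fin n, (oddPrime (i.val + 1) : ZMod (2 ^ m)) ^ (e i)) ∧
      (AddMonoidHom.ker φ).index = 2 ^ (m - 1) := by
  haveI : NeZero ((2 : ℕ) ^ m) := ⟨by positivity⟩
  let u : Fin n → (ZMod (2 ^ m))ˣ := fun i =>
    ZMod.unitOfCoprime (oddPrime (i.val + 1)) (oddPrime_coprime _ m (by omega))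
  have hu : ∀ i, (u i : ZMod (2 ^ m)) = ((oddPrime (i.val + 1) : ℕ) : ZMod (2 ^ m)) :=
    fun i => ZMod.coe_unitOfCoprime _ _
  let ψ : (Fin n → ℤ) → (ZMod (2 ^ m))ˣ := fun e => ∏ i, u i ^ (e i)
  have hψ : ∀ a b, ψ (a + b) = ψ a * ψ b := by
    intro a b
    simp only [ψ, Pi.add_apply, zpow_add, Finset.prod_mul_distrib]
  let φ : (Fin n → ℤ) →+ Additive (ZMod (2 ^ m))ˣ :=
    AddMonoidHom.mk' (fun e => Additive.ofMul (ψ e))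
      (fun a b => congrArg Additive.ofMul (hψ a b))
  have hφ : ∀ e, Additive.toMul (φ e) = ψ e := fun e => rfl
  refine ⟨φ, ?_, ?_⟩
  · intro e
    rw [hφ]
    show (((∏ i, u i ^ ((e i : ℤ))) : (ZMod (2 ^ m))ˣ) : ZMod (2 ^ m)) = _
    simp only [zpow_natCast]
    show (Units.coeHom (ZMod (2 ^ m))) (∏ x : Fin n, u x ^ e x) = _
    rw [map_prod]
    refine Finset.prod_congr rfl fun i _ => ?_
    show (((u i ^ (e i)) : (ZMod (2 ^ m))ˣ) : ZMod (2 ^ m)) = _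
    rw [Units.val_pow_eq_pow_val, hu]
  · let i0 : Fin n := ⟨0, by omega⟩
    let i1 : Fin n := ⟨1, by omega⟩
    have ha : (u i0 : ZMod (2 ^ m)) = ((3 : ℕ) : ZMod (2 ^ m)) := by
      rw [hu]
      norm_num [i0, oddPrime_one]
    have hb : (u i1 : ZMod (2 ^ m)) = ((5 : ℕ) : ZMod (2 ^ m)) := by
      rw [hu]
      norm_num [i1, oddPrime_two]
    have htop := gen_top hm (u i0) (u i1) ha hb
    have hsingle : ∀ (i : Fin n) (c : ℤ), ψ (Pi.single i c) = u i ^ c := by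
      intro i c
      simp only [ψ]
      rw [Finset.prod_eq_single i
        (fun j _ hj => by rw [Pi.single_eq_of_ne hj, zpow_zero])
        (fun h => absurd (Finset.mem_univ i) h), Pi.single_eq_same]
    have hsurj : Function.Surjective φ := by
      intro x
      obtain ⟨y, hy, z, hz, hyz⟩ :=
        Subgroup.mem_sup.mp (htop ▸ Subgroup.mem_top (Additive.toMul x))
      obtain ⟨s, rfl⟩ := Subgroup.mem_zpowers_iff.mp hy
      obtain ⟨t, rfl⟩ := Subgroup.mem_zpowers_iff.mp hz
      refine ⟨Pi.single i0 s + Pi.single i1 t, ?_⟩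
      apply Additive.toMul.injective
      rw [hφ, hψ, hsingle, hsingle]
      exact hyz
    rw [AddSubgroup.index_ker, AddMonoidHom.range_eq_top.mpr hsurj]
    rw [Nat.card_congr AddSubgroup.topEquiv.toEquiv, Nat.card_congr Additive.toMul]
    exact card_units_two_pow m hm
end

section
/- For every n ≥ 1, every full-rank lattice L in ℝⁿ contains a nonzero vector x with ‖x‖₁ ≤ (n!·det(L))^{1/n}. -/
/-- Minkowski's bound for the ℓ¹ norm: every full-rank lattice in `ℝⁿ`
(the ℤ-span of an ℝ-basis, given by the rows `b` of a matrix with nonzero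
determinant, whose covolume is `|det b|`) contains a nonzero vector `x` with
`‖x‖₁ ≤ (n! · det L)^(1/n)`. -/
theorem minkowski_l1_bound (n : ℕ) (hn : 1 ≤ n) (b : Fin n → Fin n → ℝ)
    (hb : (Matrix.of b).det ≠ 0) :
    ∃ x ∈ Submodule.span ℤ (Set.range b), x ≠ 0 ∧
      ∑ i, |x i| ≤ ((n.factorial : ℝ) * |(Matrix.of b).det|) ^ ((1 : ℝ) / n) := by
  have hne : Nonempty (Fin n) := ⟨⟨0, hn⟩⟩
  have hnt : Nontrivial (Fin n → ℝ) := inferInstance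
  -- the basis given by the rows of `b`
  have hli : LinearIndependent ℝ b := by
    exact (Matrix.linearIndependent_rows_iff_isUnit (A := Matrix.of b)).mpr
      ((Matrix.isUnit_iff_isUnit_det _).mpr (isUnit_iff_ne_zero.mpr hb))
  have hcard : Fintype.card (Fin n) = Module.finrank ℝ (Fin n → ℝ) := by simp
  set bas : Module.Basis (Fin n) ℝ (Fin n → ℝ) :=
    basisOfLinearIndependentOfCardEqFinrank hli hcard with hbas
  have hcoe : ⇑bas = b := coe_basisOfLinearIndependentOfCardEqFinrank hli hcard
  set r : ℝ := ((n.factorial : ℝ) * |(Matrix.of b).det|) ^ ((1 : ℝ) / n) with hr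
  have hr0 : 0 ≤ r := Real.rpow_nonneg (by positivity) _
  have hrn : r ^ n = (n.factorial : ℝ) * |(Matrix.of b).det| := by
    rw [hr, ← Real.rpow_natCast (_ ^ _) n, ← Real.rpow_mul (by positivity),
      one_div, inv_mul_cancel₀ (show (n : ℝ) ≠ 0 by exact_mod_cast (by omega : n ≠ 0)),
      Real.rpow_one]
  set s : Set (Fin n → ℝ) := {x | ∑ i, |x i| ≤ r} with hs
  -- basic properties of `s`
  have h_symm : ∀ x ∈ s, -x ∈ s := by
    intro x hx
    simpa [hs, abs_neg] using hx
  have h_conv : Convex ℝ s := by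
    intro x hx y hy a c ha hc hac
    simp only [hs, Set.mem_setOf_eq] at hx hy ⊢
    calc ∑ i, |(a • x + c • y) i| ≤ ∑ i, (a * |x i| + c * |y i|) := by
          refine Finset.sum_le_sum fun i _ => ?_
          simp only [Pi.add_apply, Pi.smul_apply, smul_eq_mul]
          calc |a * x i + c * y i| ≤ |a * x i| + |c * y i| := abs_add_le _ _
            _ = a * |x i| + c * |y i| := by
                rw [abs_mul, abs_mul, abs_of_nonneg ha, abs_of_nonneg hc]
      _ = a * ∑ i, |x i| + c * ∑ i, |y i| := by
          rw [Finset.sum_add_distrib, Finset.mul_sum, Finset.mul_sum]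
      _ ≤ a * r + c * r := by
          gcongr
      _ = r := by rw [← add_mul, hac, one_mul]
  have h_cpt : IsCompact s := by
    refine Metric.isCompact_of_isClosed_isBounded ?_ ?_
    · exact isClosed_le (by fun_prop) continuous_const
    · refine (Metric.isBounded_closedBall (x := (0 : Fin n → ℝ)) (r := r)).subset ?_
      intro x hx
      simp only [hs, Set.mem_setOf_eq] at hx
      rw [Metric.mem_closedBall, dist_zero_right, pi_norm_le_iff_of_nonneg hr0]
      intro i
      refine le_trans ?_ hx
      exact Finset.single_le_sum (f := fun i => |x i|) (fun j _ => abs_nonneg _)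
        (Finset.mem_univ i)
  -- volume computation
  have h_vols : MeasureTheory.volume s =
      ENNReal.ofReal r ^ n * ENNReal.ofReal (2 ^ n / (n.factorial : ℝ)) := by
    have h2 : Real.Gamma (1 + 1) = 1 := by norm_num [Real.Gamma_two]
    have h3 : Real.Gamma ((n : ℝ) + 1) = (n.factorial : ℝ) := by
      exact Real.Gamma_nat_eq_factorial n
    have := MeasureTheory.volume_sum_rpow_le (ι := Fin n) (p := (1 : ℝ)) le_rfl r
    simp only [Real.rpow_one, div_one, Fintype.card_fin, h2, h3, mul_one] at this
    rw [hs]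
    exact this
  have h_volF : MeasureTheory.volume (ZSpan.fundamentalDomain bas) =
      ENNReal.ofReal |(Matrix.of b).det| := by
    classical
    rw [ZSpan.volume_fundamentalDomain, hcoe]
  -- apply Minkowski's theorem
  have key : MeasureTheory.volume (ZSpan.fundamentalDomain bas) *
      2 ^ Module.finrank ℝ (Fin n → ℝ) ≤ MeasureTheory.volume s := by
    rw [h_volF, h_vols, ← hcard, Fintype.card_fin, ← ENNReal.ofReal_pow hr0, hrn,
      ← ENNReal.ofReal_mul (by positivity), show ((2 : ENNReal) ^ n) =
        ENNReal.ofReal (2 ^ n) by simp [ENNReal.ofReal_pow],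
      ← ENNReal.ofReal_mul (abs_nonneg _)]
    apply le_of_eq
    congr 1
    have hfac : (0 : ℝ) < (n.factorial : ℝ) := by positivity
    field_simp
  have hcnt : Countable (Submodule.span ℤ (Set.range ⇑bas)).toAddSubgroup :=
    inferInstanceAs (Countable (Submodule.span ℤ (Set.range ⇑bas)))
  obtain ⟨x, hx0, hxs⟩ :=
    MeasureTheory.exists_ne_zero_mem_lattice_of_measure_mul_two_pow_le_measure
      (ZSpan.isAddFundamentalDomain' bas MeasureTheory.volume) h_symm h_conv h_cpt key
  refine ⟨(x : Fin n → ℝ), ?_, ?_, hxs⟩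
  · rw [← hcoe]
    exact x.property
  · exact fun h => hx0 (Subtype.ext h)
end

section
/- Let p₁, p₂, … be the odd primes in increasing order, and let m : ℕ → ℕ be a function with m(n)/(n·log n/log 2) → 1 as n → ∞. Then for every ε > 0, the quantity (2^{m(n)−1}·n³·∏ᵢ₌₁ⁿ log pᵢ)^{1/(n+1)} is O(n^{1+ε}) as n → ∞. -/
open Nat Filter

lemma my_nth_prime_le_two_pow (n : ℕ) : Nat.nth Nat.Prime n ≤ 2 ^ (n + 1) := by
  induction n with
  | zero => simp
  | succ n ih =>
    have hpos : Nat.nth Nat.Prime n ≠ 0 := (Nat.prime_nth_prime n).pos.ne'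
    obtain ⟨q, hq, hlt, hle⟩ := Nat.exists_prime_lt_and_le_two_mul _ hpos
    have hcount : n + 1 < Nat.count Nat.Prime (q + 1) := by
      have h2 : Nat.count Nat.Prime (Nat.nth Nat.Prime n + 1) = n + 1 := by
        rw [Nat.count_succ, Nat.count_nth_of_infinite Nat.infinite_setOf_prime,
          if_pos (Nat.prime_nth_prime n)]
      have h3 : Nat.count Nat.Prime (q + 1) = Nat.count Nat.Prime q + 1 := by
        rw [Nat.count_succ, if_pos hq]
      have h4 : Nat.count Nat.Prime (Nat.nth Nat.Prime n + 1) ≤ Nat.count Nat.Prime q :=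
        Nat.count_monotone _ hlt
      omega
    have h1 : Nat.nth Nat.Prime (n + 1) < q + 1 :=
      (Nat.lt_nth_iff_count_lt Nat.infinite_setOf_prime).1 hcount
    calc Nat.nth Nat.Prime (n + 1) ≤ q := by omega
      _ ≤ 2 * Nat.nth Nat.Prime n := hle
      _ ≤ 2 * 2 ^ (n + 1) := by omega
      _ = 2 ^ (n + 2) := by ring

lemma my_chebyshev (N : ℕ) (hN : 0 < N) :
    4 ^ N ≤ (2 * N + 1) * (2 * N) ^ (Nat.count Nat.Prime (2 * N + 1)) := by
  set M := (2 * N).choose N with hMdef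
  have hM0 : M ≠ 0 := (Nat.choose_pos (by omega)).ne'
  have hsub : M.primeFactors ⊆ Finset.filter Nat.Prime (Finset.range (2 * N + 1)) := by
    intro p hp
    have hpp : p.Prime := Nat.prime_of_mem_primeFactors hp
    have hα : M.factorization p ≠ 0 := by
      exact (hpp.factorization_pos_of_dvd hM0 (Nat.dvd_of_mem_primeFactors hp)).ne'
    have hle2N : p ≤ 2 * N := by
      calc p ≤ p ^ M.factorization p := Nat.le_self_pow hα p
        _ ≤ 2 * N := Nat.pow_factorization_choose_le (by omega)
    simp only [Finset.mem_filter, Finset.mem_range]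
    exact ⟨by omega, hpp⟩
  have hcard : M.primeFactors.card ≤ Nat.count Nat.Prime (2 * N + 1) := by
    rw [Nat.count_eq_card_filter_range]
    exact Finset.card_le_card hsub
  have hMle : M ≤ (2 * N) ^ (Nat.count Nat.Prime (2 * N + 1)) := by
    calc M = M.factorization.prod (· ^ ·) := (Nat.factorization_prod_pow_eq_self hM0).symm
      _ = ∏ p ∈ M.primeFactors, p ^ M.factorization p := by
          rw [Finsupp.prod, Nat.support_factorization]
      _ ≤ ∏ p ∈ M.primeFactors, 2 * N := by
          apply Finset.prod_le_prod'
          intro p hp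
          exact Nat.pow_factorization_choose_le (by omega)
      _ = (2 * N) ^ M.primeFactors.card := by rw [Finset.prod_const]
      _ ≤ (2 * N) ^ (Nat.count Nat.Prime (2 * N + 1)) :=
          Nat.pow_le_pow_right (by omega) hcard
  calc 4 ^ N ≤ (2 * N + 1) * M := Nat.four_pow_le_two_mul_add_one_mul_central_binom N
    _ ≤ (2 * N + 1) * (2 * N) ^ (Nat.count Nat.Prime (2 * N + 1)) :=
        Nat.mul_le_mul_left _ hMle

lemma my_nth_prime_le_sq (n : ℕ) (hn : 1 ≤ n) :
    Nat.nth Nat.Prime n + 1 ≤ (n + 2) ^ 2 := by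
  set P := Nat.nth Nat.Prime n with hPdef
  have hP : P.Prime := Nat.prime_nth_prime n
  have hP3 : 3 ≤ P := by
    have : Nat.nth Nat.Prime 1 ≤ P :=
      Nat.nth_monotone Nat.infinite_setOf_prime hn
    simpa using this
  have hodd : Odd P := hP.odd_of_ne_two (by omega)
  obtain ⟨k, hk⟩ := hodd
  -- N : 2 * N = P + 1
  set N := k + 1 with hNdef
  have h2N : 2 * N = P + 1 := by omega
  have hN1 : 1 ≤ N := by omega
  -- count of primes ≤ P is n+1 ; P+1 is not prime
  have hcount1 : Nat.count Nat.Prime (P + 1) = n + 1 := by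
    rw [Nat.count_succ, Nat.count_nth_of_infinite Nat.infinite_setOf_prime, if_pos hP]
  have hnotprime : ¬ (P + 1).Prime := by
    intro h
    have h2 : 2 ∣ P + 1 := by omega
    have := (Nat.Prime.eq_one_or_self_of_dvd h 2 h2)
    omega
  have hcount2 : Nat.count Nat.Prime (2 * N + 1) = n + 1 := by
    have : 2 * N + 1 = (P + 1) + 1 := by omega
    rw [this, Nat.count_succ, if_neg hnotprime, hcount1]
  have hcheb := my_chebyshev N (by omega)
  rw [hcount2, h2N] at hcheb
  -- 4^N = 2^(P+1)
  have h4N : 4 ^ N = 2 ^ (P + 1) := by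
    rw [← h2N, pow_mul]
    norm_num
  -- P + 2 ≤ 2^(n+2)
  have hPpow : P + 2 ≤ 2 ^ (n + 2) := by
    have h1 := my_nth_prime_le_two_pow n
    have h2 : 2 ≤ 2 ^ (n + 1) := Nat.one_lt_two_pow_iff.mpr (by omega)
    calc P + 2 ≤ 2 ^ (n + 1) + 2 ^ (n + 1) := by omega
      _ = 2 ^ (n + 2) := by ring
  have hbig : 2 ^ (P + 1) ≤ (2 ^ (n + 2)) ^ (n + 2) := by
    calc 2 ^ (P + 1) = 4 ^ N := h4N.symm
      _ ≤ (P + 2) * (P + 1) ^ (n + 1) := hcheb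
      _ ≤ (P + 2) * (P + 2) ^ (n + 1) := by
          exact Nat.mul_le_mul_left _ (Nat.pow_le_pow_left (by omega) _)
      _ = (P + 2) ^ (n + 2) := by ring
      _ ≤ (2 ^ (n + 2)) ^ (n + 2) := Nat.pow_le_pow_left hPpow _
  rw [← pow_mul] at hbig
  have := (Nat.pow_le_pow_iff_right (a := 2) (by omega)).1 hbig
  calc P + 1 ≤ (n + 2) * (n + 2) := this
    _ = (n + 2) ^ 2 := by ring

lemma my_log_nth_prime_eventually {δ : ℝ} (hδ : 0 < δ) :
    ∀ᶠ n : ℕ in atTop, Real.log (Nat.nth Nat.Prime n) ≤ (n : ℝ) ^ δ := by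
  have htend : Tendsto (fun n : ℕ => ((n : ℝ) + 2)) atTop atTop :=
    tendsto_atTop_add_const_right _ 2 tendsto_natCast_atTop_atTop
  have hlo := (isLittleO_log_rpow_atTop (by positivity : 0 < δ / 2)).comp_tendsto htend
  have hb := hlo.bound (by norm_num : (0:ℝ) < 1/4)
  filter_upwards [hb, eventually_ge_atTop 2] with n hbn hn2
  have hn2R : (2 : ℝ) ≤ (n : ℝ) := by exact_mod_cast hn2
  have hnn : (0:ℝ) ≤ (n : ℝ) := by linarith
  simp only [Function.comp] at hbn
  rw [Real.norm_eq_abs, Real.norm_eq_abs,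
    abs_of_nonneg (Real.log_nonneg (by linarith)),
    abs_of_nonneg (Real.rpow_nonneg (by linarith) _)] at hbn
  have hnth : (Nat.nth Nat.Prime n : ℝ) ≤ ((n : ℝ) + 2) ^ (2 : ℕ) := by
    have := my_nth_prime_le_sq n (by omega)
    have h2 : (Nat.nth Nat.Prime n : ℝ) + 1 ≤ ((n : ℝ) + 2) ^ (2 : ℕ) := by
      exact_mod_cast this
    linarith
  have hpos : (0:ℝ) < (Nat.nth Nat.Prime n : ℝ) := by
    exact_mod_cast (Nat.prime_nth_prime n).pos
  calc Real.log (Nat.nth Nat.Prime n) ≤ Real.log (((n : ℝ) + 2) ^ (2 : ℕ)) :=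
        Real.log_le_log hpos hnth
    _ = 2 * Real.log ((n : ℝ) + 2) := by rw [Real.log_pow]; push_cast; ring
    _ ≤ 2 * (1/4 * ((n : ℝ) + 2) ^ (δ/2)) := by linarith
    _ = 1/2 * ((n : ℝ) + 2) ^ (δ/2) := by ring
    _ ≤ 1/2 * ((n : ℝ) ^ (2:ℝ)) ^ (δ/2) := by
        have hle : (n : ℝ) + 2 ≤ (n : ℝ) ^ (2:ℝ) := by
          rw [Real.rpow_two]; nlinarith
        have := Real.rpow_le_rpow (by linarith) hle (by positivity : (0:ℝ) ≤ δ/2)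
        linarith
    _ = 1/2 * (n : ℝ) ^ δ := by
        rw [← Real.rpow_mul hnn]
        ring_nf
    _ ≤ (n : ℝ) ^ δ := by
        have : (0:ℝ) ≤ (n : ℝ) ^ δ := Real.rpow_nonneg hnn _
        linarith

open Filter in
/-- If `m(n) ~ n·log₂ n`, then `(2^(m(n)-1) · n³ · ∏ᵢ₌₁ⁿ log pᵢ)^(1/(n+1)) = O(n^(1+ε))`
for every `ε > 0`, where `pᵢ` is the i-th odd prime. -/
theorem det_root_isBigO (m : ℕ → ℕ)
    (hm : Tendsto (fun n : ℕ => (m n : ℝ) / ((n : ℝ) * Real.log n / Real.log 2))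
      atTop (nhds 1)) :
    ∀ ε : ℝ, 0 < ε →
      (fun n : ℕ => ((2 : ℝ) ^ (m n - 1) * (n : ℝ) ^ 3 *
          ∏ i ∈ Finset.Icc 1 n, Real.log (Nat.nth Nat.Prime i)) ^ ((1 : ℝ) / ((n : ℝ) + 1)))
        =O[atTop] fun n : ℕ => (n : ℝ) ^ ((1 : ℝ) + ε) := by
  intro ε hε
  have hE1 : ∀ᶠ n : ℕ in atTop,
      (m n : ℝ) / ((n : ℝ) * Real.log n / Real.log 2) < 1 + ε / 2 :=
    hm.eventually_lt_const (by linarith)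
  have hE2 := my_log_nth_prime_eventually (show (0:ℝ) < ε / 4 by linarith)
  have hE3 : ∀ᶠ n : ℕ in atTop, 8 / ε ≤ (n : ℝ) :=
    tendsto_natCast_atTop_atTop.eventually_ge_atTop _
  rw [Asymptotics.isBigO_iff]
  refine ⟨1, ?_⟩
  filter_upwards [hE1, hE2, hE3, eventually_ge_atTop 3] with n h1 h2 h3 hn3
  have hn3R : (3:ℝ) ≤ (n : ℝ) := by exact_mod_cast hn3
  have hn0 : (0:ℝ) < (n : ℝ) := by linarith
  have hn1 : (1:ℝ) ≤ (n : ℝ) := by linarith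
  have hlogn : 0 < Real.log n := Real.log_pos (by linarith)
  have hlog2 : 0 < Real.log 2 := Real.log_pos one_lt_two
  have hD : (0:ℝ) < (n : ℝ) * Real.log n / Real.log 2 := by positivity
  have hmn : (m n : ℝ) * Real.log 2 ≤ (1 + ε / 2) * ((n : ℝ) * Real.log n) := by
    have hd := (div_le_iff₀ hD).1 h1.le
    calc (m n : ℝ) * Real.log 2
        ≤ (1 + ε / 2) * ((n : ℝ) * Real.log n / Real.log 2) * Real.log 2 :=
          mul_le_mul_of_nonneg_right hd hlog2.le
      _ = (1 + ε / 2) * ((n : ℝ) * Real.log n) := by field_simp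
  have hf1 : (2:ℝ) ^ (m n - 1) ≤ (n : ℝ) ^ ((1 + ε / 2) * (n : ℝ)) := by
    calc (2:ℝ) ^ (m n - 1) ≤ (2:ℝ) ^ (m n) :=
          pow_le_pow_right₀ one_le_two (Nat.sub_le _ _)
      _ = Real.exp (Real.log 2 * (m n : ℝ)) := by
          rw [← Real.rpow_natCast 2 (m n), Real.rpow_def_of_pos two_pos]
      _ ≤ Real.exp (Real.log (n : ℝ) * ((1 + ε / 2) * (n : ℝ))) := by
          rw [Real.exp_le_exp]; nlinarith [hmn]
      _ = (n : ℝ) ^ ((1 + ε / 2) * (n : ℝ)) := (Real.rpow_def_of_pos hn0 _).symm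
  have hprodnn : (0:ℝ) ≤ ∏ i ∈ Finset.Icc 1 n, Real.log (Nat.nth Nat.Prime i) :=
    Finset.prod_nonneg fun i _ =>
      Real.log_nonneg (by exact_mod_cast (Nat.prime_nth_prime i).one_lt.le)
  have hprod : (∏ i ∈ Finset.Icc 1 n, Real.log (Nat.nth Nat.Prime i))
      ≤ (n : ℝ) ^ (ε / 4 * (n : ℝ)) := by
    calc ∏ i ∈ Finset.Icc 1 n, Real.log (Nat.nth Nat.Prime i)
        ≤ ∏ _i ∈ Finset.Icc 1 n, (n : ℝ) ^ (ε / 4) := by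
          apply Finset.prod_le_prod
          · intro i _
            exact Real.log_nonneg (by exact_mod_cast (Nat.prime_nth_prime i).one_lt.le)
          · intro i hi
            rw [Finset.mem_Icc] at hi
            have hmono : Nat.nth Nat.Prime i ≤ Nat.nth Nat.Prime n :=
              Nat.nth_monotone Nat.infinite_setOf_prime hi.2
            have hll : Real.log (Nat.nth Nat.Prime i) ≤ Real.log (Nat.nth Nat.Prime n) :=
              Real.log_le_log (by exact_mod_cast (Nat.prime_nth_prime i).pos)
                (by exact_mod_cast hmono)
            linarith
      _ = ((n : ℝ) ^ (ε / 4)) ^ (n : ℕ) := by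
          rw [Finset.prod_const, Nat.card_Icc]
          norm_num
      _ = (n : ℝ) ^ (ε / 4 * (n : ℝ)) := by
          rw [← Real.rpow_natCast ((n : ℝ) ^ (ε / 4)) n, ← Real.rpow_mul hn0.le]
  have hf2 : ((n : ℝ)) ^ (3 : ℕ) = (n : ℝ) ^ ((3:ℝ)) := by
    rw [← Real.rpow_natCast (n : ℝ) 3]; norm_num
  have hB : (2:ℝ) ^ (m n - 1) * (n : ℝ) ^ 3 *
      ∏ i ∈ Finset.Icc 1 n, Real.log (Nat.nth Nat.Prime i)
      ≤ (n : ℝ) ^ ((1 + ε / 2) * (n : ℝ) + 3 + ε / 4 * (n : ℝ)) := by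
    rw [Real.rpow_add hn0, Real.rpow_add hn0]
    apply mul_le_mul _ hprod hprodnn (by positivity)
    exact mul_le_mul hf1 (le_of_eq hf2) (by positivity) (Real.rpow_nonneg hn0.le _)
  have hBnn : (0:ℝ) ≤ (2:ℝ) ^ (m n - 1) * (n : ℝ) ^ 3 *
      ∏ i ∈ Finset.Icc 1 n, Real.log (Nat.nth Nat.Prime i) := by
    apply mul_nonneg (by positivity) hprodnn
  have h8 : (8:ℝ) ≤ ε * (n : ℝ) := by
    rw [div_le_iff₀ hε] at h3; linarith
  have hexp : (1 + ε / 2) * (n : ℝ) + 3 + ε / 4 * (n : ℝ) ≤ (1 + ε) * ((n : ℝ) + 1) := by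
    nlinarith
  have h1n : (0:ℝ) < (1:ℝ) / ((n : ℝ) + 1) := by positivity
  have hfinal : ((2:ℝ) ^ (m n - 1) * (n : ℝ) ^ 3 *
      ∏ i ∈ Finset.Icc 1 n, Real.log (Nat.nth Nat.Prime i)) ^ ((1:ℝ) / ((n : ℝ) + 1))
      ≤ (n : ℝ) ^ ((1:ℝ) + ε) := by
    calc ((2:ℝ) ^ (m n - 1) * (n : ℝ) ^ 3 *
        ∏ i ∈ Finset.Icc 1 n, Real.log (Nat.nth Nat.Prime i)) ^ ((1:ℝ) / ((n : ℝ) + 1))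
        ≤ ((n : ℝ) ^ ((1 + ε) * ((n : ℝ) + 1))) ^ ((1:ℝ) / ((n : ℝ) + 1)) :=
          Real.rpow_le_rpow hBnn
            (hB.trans (Real.rpow_le_rpow_of_exponent_le hn1 hexp)) h1n.le
      _ = (n : ℝ) ^ ((1:ℝ) + ε) := by
          rw [← Real.rpow_mul hn0.le]
          congr 1
          field_simp
  rw [Real.norm_eq_abs, Real.norm_eq_abs, abs_of_nonneg (Real.rpow_nonneg hBnn _),
    abs_of_nonneg (Real.rpow_nonneg hn0.le _), one_mul]
  exact hfinal
end
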